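/- Let H be a nonempty axis-aligned region in ℝ^{n₁}×⋯×ℝ^{n_k} and let M : ℝ^{n₁}×⋯×ℝ^{n_k} → ℝ be multilinear. Then conv{(x, M(x)) : x ∈ H} = conv{(v, M(v)) : v ∈ corner(H)}; in particular, the convex hull of the graph of M over H is a polytope generated by the finitely many points (v, M(v)) with v ∈ corner(H). -/

import Mathlib

/-- `M` is multilinear in the block variables: fixing all blocks except the `j`-th yields an
affine map `ℝ^{n_j} → ℝ`. -/
def IsBlockMultilinear {k : ℕ} {n : Fin k → ℕ}
    (M : ((j : Fin k) → (Fin (n j) → ℝ)) → ℝ) : Prop :=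
  ∀ (j : Fin k) (x : (j : Fin k) → Fin (n j) → ℝ),
    ∃ A : (Fin (n j) → ℝ) →ᵃ[ℝ] ℝ, ∀ y : Fin (n j) → ℝ, M (Function.update x j y) = A y

/-- An axis-aligned region in `ℝ^{n₁} × ⋯ × ℝ^{n_k}`: a finite union of products of
polytopes (convex hulls of nonempty finite sets), one polytope per block. -/
def IsBlockAxisAligned {k : ℕ} {n : Fin k → ℕ}
    (H : Set ((j : Fin k) → Fin (n j) → ℝ)) : Prop :=
  ∃ (N : ℕ) (V : Fin N → (j : Fin k) → Finset (Fin (n j) → ℝ)),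
    (∀ i j, (V i j).Nonempty) ∧
    H = ⋃ i : Fin N, {x | ∀ j, x j ∈ convexHull ℝ ((V i j : Set (Fin (n j) → ℝ)))}

/-- The corner points of a region `H`: points of `H` each of whose block coordinates is an
extreme point of the convex hull of the corresponding slice of `H`. -/
def blockCornerSet {k : ℕ} {n : Fin k → ℕ}
    (H : Set ((j : Fin k) → Fin (n j) → ℝ)) : Set ((j : Fin k) → Fin (n j) → ℝ) :=
  {v | v ∈ H ∧ ∀ j, v j ∈ Set.extremePoints ℝ
    (convexHull ℝ {y : Fin (n j) → ℝ | Function.update v j y ∈ H})}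


open Set Function

/-- The affine map `y ↦ (Function.update x j y, A y)`. -/
noncomputable def graphUpdAff {k : ℕ} {n : Fin k → ℕ}
    (x : (j : Fin k) → Fin (n j) → ℝ) (j : Fin k)
    (A : (Fin (n j) → ℝ) →ᵃ[ℝ] ℝ) :
    (Fin (n j) → ℝ) →ᵃ[ℝ] (((j : Fin k) → Fin (n j) → ℝ) × ℝ) where
  toFun := fun y => (Function.update x j y, A y)
  linear := ((LinearMap.single ℝ (fun j => Fin (n j) → ℝ) j)).prod A.linear
  map_vadd' := by
    intro p v
    have h1 : Function.update x j (v +ᵥ p) =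
        Pi.single j v + Function.update x j p := by
      funext j'
      by_cases h : j' = j
      · subst h; simp
      · simp [Function.update_of_ne h, Pi.single_eq_of_ne h]
    have h2 : A (v +ᵥ p) = A.linear v +ᵥ A p := A.map_vadd' p v
    simp only [vadd_eq_add, LinearMap.prod_apply, LinearMap.coe_single, Pi.prod,
      Prod.mk_add_mk]
    rw [vadd_eq_add] at h1 h2
    exact Prod.ext h1 h2

theorem exists_graphAffine {k : ℕ} {n : Fin k → ℕ}
    {M : ((j : Fin k) → Fin (n j) → ℝ) → ℝ} (hM : IsBlockMultilinear M)
    (x : (j : Fin k) → Fin (n j) → ℝ) (j : Fin k) :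
    ∃ f : (Fin (n j) → ℝ) →ᵃ[ℝ] (((j : Fin k) → Fin (n j) → ℝ) × ℝ),
      ∀ y, f y = (Function.update x j y, M (Function.update x j y)) := by
  obtain ⟨A, hA⟩ := hM j x
  exact ⟨graphUpdAff x j A, fun y => by
    show (Function.update x j y, A y) = _
    rw [hA y]⟩

/-- Single-block step: if `x j ∈ convexHull S`, the graph point of `x` lies in the convex hull
of graph points with `j`-th block replaced by members of `S`. -/
theorem graph_mem_convexHull_update {k : ℕ} {n : Fin k → ℕ}
    {M : ((j : Fin k) → Fin (n j) → ℝ) → ℝ} (hM : IsBlockMultilinear M)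
    (x : (j : Fin k) → Fin (n j) → ℝ) (j : Fin k) (S : Set (Fin (n j) → ℝ))
    (hx : x j ∈ convexHull ℝ S) :
    (x, M x) ∈ convexHull ℝ
      ((fun z => (z, M z)) '' (Function.update x j '' S)) := by
  obtain ⟨f, hf⟩ := exists_graphAffine hM x j
  have himg : f '' S = (fun z => (z, M z)) '' (Function.update x j '' S) := by
    rw [Set.image_image]
    exact Set.image_congr fun y _ => hf y
  have hmem : f (x j) ∈ f '' convexHull ℝ S := ⟨x j, hx, rfl⟩
  rw [AffineMap.image_convexHull, himg] at hmem
  have hfx : f (x j) = (x, M x) := by rw [hf, Function.update_eq_self]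
  rwa [hfx] at hmem

theorem multilinear_over_axis_aligned_region_corner_generated
    (k : ℕ) (hk : 0 < k) (n : Fin k → ℕ) (hn : ∀ j, 0 < n j)
    (H : Set ((j : Fin k) → Fin (n j) → ℝ)) (hne : H.Nonempty)
    (hH : IsBlockAxisAligned H)
    (M : ((j : Fin k) → (Fin (n j) → ℝ)) → ℝ) (hM : IsBlockMultilinear M) :
    (blockCornerSet H).Finite ∧
    convexHull ℝ ((fun x : (j : Fin k) → Fin (n j) → ℝ => (x, M x)) '' H) =
      convexHull ℝ ((fun v : (j : Fin k) → Fin (n j) → ℝ => (v, M v)) ''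
        blockCornerSet H) := by
  obtain ⟨N, V, hVne, hHeq⟩ := hH
  set g : ((j : Fin k) → Fin (n j) → ℝ) → (((j : Fin k) → Fin (n j) → ℝ) × ℝ) :=
    fun x => (x, M x) with hg
  -- the finite global vertex superset
  have hPiFin : (Set.pi Set.univ fun j => ⋃ i, ((V i j : Set (Fin (n j) → ℝ)))).Finite :=
    Set.Finite.pi fun j => Set.finite_iUnion fun i => (V i j).finite_toSet
  -- corner set is finite
  have hcornerH : blockCornerSet H ⊆ H := fun v hv => hv.1
  have hcornerFin : (blockCornerSet H).Finite := by
    refine hPiFin.subset ?_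
    rintro v ⟨hvH, hv⟩ j -
    -- the slice at block j equals a union of cells' hulls
    set S : Set (Fin (n j) → ℝ) := {y | Function.update v j y ∈ H} with hS
    set T : Set (Fin (n j) → ℝ) :=
      {w | ∃ i, (∀ j', j' ≠ j → v j' ∈ convexHull ℝ ((V i j' : Set (Fin (n j') → ℝ)))) ∧
        w ∈ V i j} with hT
    have hTS : T ⊆ S := by
      rintro w ⟨i, hcomp, hw⟩
      show Function.update v j w ∈ H
      rw [hHeq]
      refine Set.mem_iUnion.2 ⟨i, fun j' => ?_⟩
      by_cases h : j' = j
      · subst h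
        rw [Function.update_self]
        exact subset_convexHull ℝ _ hw
      · rw [Function.update_of_ne h]
        exact hcomp j' h
    have hST : S ⊆ convexHull ℝ T := by
      intro y hy
      rw [hS, Set.mem_setOf_eq, hHeq] at hy
      obtain ⟨i, hi⟩ := Set.mem_iUnion.1 hy
      have hi' : ∀ j', Function.update v j y j' ∈
          convexHull ℝ ((V i j' : Set (Fin (n j') → ℝ))) := hi
      have hcomp : ∀ j', j' ≠ j → v j' ∈ convexHull ℝ ((V i j' : Set (Fin (n j') → ℝ))) := by
        intro j' h
        have := hi' j'
        rwa [Function.update_of_ne h] at this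
      have hyV : y ∈ convexHull ℝ ((V i j : Set (Fin (n j) → ℝ))) := by
        have := hi' j
        rwa [Function.update_self] at this
      have hsubT : ((V i j : Set (Fin (n j) → ℝ))) ⊆ T := fun w hw => ⟨i, hcomp, hw⟩
      exact convexHull_mono hsubT hyV
    have hconvEq : convexHull ℝ S = convexHull ℝ T :=
      le_antisymm (convexHull_min hST (convex_convexHull ℝ T))
        (convexHull_mono hTS)
    have hvj := hv j
    rw [hconvEq] at hvj
    have := extremePoints_convexHull_subset hvj
    obtain ⟨i, -, hwi⟩ := this
    exact Set.mem_iUnion.2 ⟨i, hwi⟩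
  refine ⟨hcornerFin, ?_⟩
  -- the finite set W of cell vertices
  set W : Set ((j : Fin k) → Fin (n j) → ℝ) :=
    {z | ∃ i, ∀ j, z j ∈ V i j} with hW
  have hWfin : W.Finite := by
    refine hPiFin.subset ?_
    rintro z ⟨i, hz⟩ j -
    exact Set.mem_iUnion.2 ⟨i, hz j⟩
  have hWH : W ⊆ H := by
    rintro z ⟨i, hz⟩
    rw [hHeq]
    exact Set.mem_iUnion.2 ⟨i, fun j => subset_convexHull ℝ _ (hz j)⟩
  -- Lemma A: graph points over H lie in hull of graph points over W
  have lemA : ∀ x ∈ H, g x ∈ convexHull ℝ (g '' W) := by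
    intro x hx
    rw [hHeq] at hx
    obtain ⟨i, hi⟩ := Set.mem_iUnion.1 hx
    have hi' : ∀ j, x j ∈ convexHull ℝ ((V i j : Set (Fin (n j) → ℝ))) := hi
    set T : ℕ → Set ((j : Fin k) → Fin (n j) → ℝ) := fun m =>
      {z | (∀ j : Fin k, (j : ℕ) < m → z j ∈ V i j) ∧
           (∀ j : Fin k, m ≤ (j : ℕ) → z j = x j)} with hTdef
    have hTconv : ∀ m, ∀ z ∈ T m, ∀ j,
        z j ∈ convexHull ℝ ((V i j : Set (Fin (n j) → ℝ))) := by
      intro m z hz j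
      rcases lt_or_ge (j : ℕ) m with h | h
      · exact subset_convexHull ℝ _ (hz.1 j h)
      · rw [hz.2 j h]; exact hi' j
    have key : ∀ m, m ≤ k → g x ∈ convexHull ℝ (g '' T m) := by
      intro m
      induction m with
      | zero =>
        intro _
        exact subset_convexHull ℝ _
          ⟨x, ⟨fun j h => absurd h (Nat.not_lt_zero _), fun j _ => rfl⟩, rfl⟩
      | succ m ih =>
        intro hmk
        have hm : m < k := hmk
        have h1 := ih hm.le
        have hsub : g '' T m ⊆ convexHull ℝ (g '' T (m + 1)) := by
          rintro _ ⟨z, hz, rfl⟩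
          set jm : Fin k := ⟨m, hm⟩ with hjm
          have hzj : z jm ∈ convexHull ℝ ((V i jm : Set (Fin (n jm) → ℝ))) :=
            hTconv m z hz jm
          have hone := graph_mem_convexHull_update hM z jm _ hzj
          refine convexHull_mono (Set.image_mono ?_) hone
          rintro _ ⟨w, hw, rfl⟩
          constructor
          · intro j hj
            by_cases h : j = jm
            · subst h
              rwa [Function.update_self]
            · have hjm' : (j : ℕ) ≠ m := fun hc => h (Fin.ext hc)
              rw [Function.update_of_ne h]
              exact hz.1 j (lt_of_le_of_ne (Nat.lt_succ_iff.1 hj) hjm')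
          · intro j hj
            have h : j ≠ jm := fun hc => by
              rw [hc] at hj
              exact absurd hj (by simp [hjm])
            rw [Function.update_of_ne h]
            exact hz.2 j (le_trans (Nat.le_succ m) hj)
        exact convexHull_min hsub (convex_convexHull ℝ _) h1
    have hTk : T k ⊆ W := fun z hz => ⟨i, fun j => hz.1 j j.isLt⟩
    exact convexHull_mono (Set.image_mono hTk) (key k le_rfl)
  set C := convexHull ℝ (g '' H) with hC
  have hCW : C = convexHull ℝ (g '' W) := by
    refine le_antisymm (convexHull_min ?_ (convex_convexHull ℝ _))
      (convexHull_mono (Set.image_mono hWH))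
    rintro _ ⟨x, hx, rfl⟩
    exact lemA x hx
  have hCcomp : IsCompact C := by
    rw [hCW]
    exact (hWfin.image g).isCompact_convexHull ℝ
  -- Lemma B: extreme points of C are graph points over corners
  have lemB : Set.extremePoints ℝ C ⊆ g '' blockCornerSet H := by
    intro p hp
    have hpg : p ∈ g '' H := extremePoints_convexHull_subset hp
    obtain ⟨v, hvH, rfl⟩ := hpg
    refine ⟨v, ⟨hvH, fun j => ?_⟩, rfl⟩
    set S : Set (Fin (n j) → ℝ) := {y | Function.update v j y ∈ H} with hS
    obtain ⟨f, hf⟩ := exists_graphAffine hM v j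
    have hfC : ∀ y ∈ convexHull ℝ S, f y ∈ C := by
      intro y hy
      have h1 : f '' convexHull ℝ S = convexHull ℝ (f '' S) :=
        AffineMap.image_convexHull f S
      have h2 : f '' S ⊆ g '' H := by
        rintro _ ⟨y', hy', rfl⟩
        exact ⟨Function.update v j y', hy', (hf y').symm⟩
      have : f y ∈ convexHull ℝ (f '' S) := h1 ▸ ⟨y, hy, rfl⟩
      exact convexHull_mono h2 this
    have hfv : f (v j) = g v := by rw [hf, Function.update_eq_self]
    rw [mem_extremePoints]
    constructor
    · exact subset_convexHull ℝ _ (show v j ∈ S by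
        simpa [hS, Function.update_eq_self] using hvH)
    · intro y₁ hy₁ y₂ hy₂ hseg
      have hseg' : f (v j) ∈ openSegment ℝ (f y₁) (f y₂) := by
        rw [← image_openSegment]
        exact ⟨v j, hseg, rfl⟩
      rw [hfv] at hseg'
      obtain ⟨h1, h2⟩ := (mem_extremePoints.1 hp).2 _ (hfC y₁ hy₁) _ (hfC y₂ hy₂) hseg'
      constructor
      · have : Function.update v j y₁ = v := congrArg Prod.fst ((hf y₁).symm.trans h1)
        have := congrFun this j
        rwa [Function.update_self] at this
      · have : Function.update v j y₂ = v := congrArg Prod.fst ((hf y₂).symm.trans h2)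
        have := congrFun this j
        rwa [Function.update_self] at this
  -- conclude via Krein–Milman
  have hextFin : (Set.extremePoints ℝ C).Finite := by
    refine (hWfin.image g).subset ?_
    rw [hCW]
    exact extremePoints_convexHull_subset
  have hKM : closure (convexHull ℝ (Set.extremePoints ℝ C)) = C :=
    closure_convexHull_extremePoints hCcomp (convex_convexHull ℝ _)
  have hCeq : convexHull ℝ (Set.extremePoints ℝ C) = C :=
    ((hextFin.isCompact_convexHull ℝ).isClosed.closure_eq).symm.trans hKM
  refine le_antisymm ?_ (convexHull_mono (Set.image_mono hcornerH))
  calc C = convexHull ℝ (Set.extremePoints ℝ C) := hCeq.symm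
    _ ⊆ convexHull ℝ (g '' blockCornerSet H) := convexHull_mono lemB
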